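/- Define A(h) = Σ_{i=h}^{m-1} y_{i+1}·A_{i-h}^i and B(h) = Σ_{i=h}^{m} C(i,h)·y_i − (−1)^h·y_h for a vector (y_0,…,y_m) in a commutative ring k. Then 2·A(h) − A(h+1) = (−1)^h · B(h+1) for all h = 0, …, m−1. -/

import Mathlib

/-- `A n N = ∑_{k=0}^{N-n} (-1)^k * C(n+k, n)` as an integer. -/
def altBinomSum (n N : ℕ) : ℤ :=
  ∑ k ∈ Finset.range (N - n + 1), (-1 : ℤ) ^ k * ((n + k).choose n : ℤ)

lemma g_key (n d : ℕ) :
    2 * (∑ k ∈ Finset.range (d + 1), (-1 : ℤ) ^ k * ((n + 1 + k).choose (n + 1) : ℤ))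
      - (∑ k ∈ Finset.range (d + 2), (-1 : ℤ) ^ k * ((n + k).choose n : ℤ))
      = (-1 : ℤ) ^ d * ((n + d + 2).choose (n + 1) : ℤ) := by
  induction d with
  | zero =>
      simp [Finset.sum_range_succ, Nat.choose_succ_self_right]
      ring
  | succ d ih =>
      rw [Finset.sum_range_succ _ (d + 1), Finset.sum_range_succ _ (d + 2),
        show n + (d + 1) + 2 = (n + d + 2) + 1 from by ring, Nat.choose_succ_succ]
      have h1 : n + 1 + (d + 1) = n + d + 2 := by ring
      have h2 : n + (d + 2) = n + d + 2 := by ring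
      rw [h1, h2]
      push_cast
      linear_combination ih

lemma key (h i : ℕ) (hi : h + 1 ≤ i) :
    2 * altBinomSum (i - h) i - altBinomSum (i - h - 1) i
      = (-1 : ℤ) ^ h * ((i + 1).choose (h + 1) : ℤ) := by
  obtain ⟨n, rfl⟩ : ∃ n, i = n + h + 1 := ⟨i - h - 1, by omega⟩
  have e1 : n + h + 1 - h = n + 1 := by omega
  rw [e1, show n + 1 - 1 = n from by omega]
  unfold altBinomSum
  rw [show n + h + 1 - (n + 1) + 1 = h + 1 from by omega,
    show n + h + 1 - n + 1 = h + 2 from by omega]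
  rw [g_key n h]
  congr 1
  rw [show n + h + 1 + 1 = n + h + 2 from by ring]
  rw [show n + 1 = (n + h + 2) - (h + 1) from by omega, Nat.choose_symm (by omega)]

lemma alt0 (h : ℕ) : 2 * altBinomSum 0 h = 1 + (-1 : ℤ) ^ h := by
  unfold altBinomSum
  simp only [Nat.sub_zero, Nat.zero_add, Nat.choose_zero_right, Nat.cast_one, mul_one,
    neg_one_geom_sum]
  rcases Nat.even_or_odd h with he | ho
  · rw [if_neg (by simp [Nat.even_add_one, he]), he.neg_one_pow]; ring
  · rw [if_pos (by simp [Nat.even_add_one, ho]), ho.neg_one_pow]; ring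

theorem stmt4 (k : Type*) [CommRing k] (m : ℕ) (hm : 1 ≤ m) (y : ℕ → k)
    (A B : ℕ → k)
    (hA : ∀ h : ℕ, A h = ∑ i ∈ Finset.Icc h (m - 1), altBinomSum (i - h) i • y (i + 1))
    (hB : ∀ h : ℕ, B h = ∑ i ∈ Finset.Icc h m, (i.choose h : k) * y i - (-1 : k) ^ h * y h) :
    ∀ h : ℕ, h ≤ m - 1 → 2 * A h - A (h + 1) = (-1 : k) ^ h * B (h + 1) := by
  intro h hh
  rw [hA h, hA (h + 1), hB (h + 1)]
  simp only [zsmul_eq_mul]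
  -- reindex the B-sum
  have hmap : Finset.Icc (h + 1) m
      = (Finset.Icc h (m - 1)).map (addRightEmbedding 1) := by
    rw [Finset.map_add_right_Icc]
    congr 1
    omega
  rw [hmap, Finset.sum_map]
  simp only [addRightEmbedding_apply]
  -- split off the i = h term on both sides
  have hsplit : Finset.Icc h (m - 1) = insert h (Finset.Icc (h + 1) (m - 1)) := by
    ext a
    simp only [Finset.mem_Icc, Finset.mem_insert]
    omega
  have hnot : h ∉ Finset.Icc (h + 1) (m - 1) := by simp
  rw [hsplit, Finset.sum_insert hnot, Finset.sum_insert hnot]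
  rw [Nat.sub_self, Nat.choose_self, Nat.cast_one]
  have hpt : ∀ i ∈ Finset.Icc (h + 1) (m - 1),
      2 * ((altBinomSum (i - h) i : k) * y (i + 1))
        - (altBinomSum (i - (h + 1)) i : k) * y (i + 1)
        = (-1 : k) ^ h * (((i + 1).choose (h + 1) : k) * y (i + 1)) := by
    intro i hi
    have hle : h + 1 ≤ i := (Finset.mem_Icc.mp hi).1
    have hcast : ((2 * altBinomSum (i - h) i - altBinomSum (i - h - 1) i : ℤ) : k)
        = (((-1 : ℤ) ^ h * ((i + 1).choose (h + 1) : ℤ) : ℤ) : k) := by rw [key h i hle]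
    push_cast at hcast
    rw [show i - (h + 1) = i - h - 1 from by omega]
    linear_combination y (i + 1) * hcast
  have hsum := Finset.sum_congr rfl hpt
  rw [Finset.sum_sub_distrib] at hsum
  have h0 : ((altBinomSum 0 h : ℤ) : k) * 2 = 1 + (-1 : k) ^ h := by
    have h0' : ((2 * altBinomSum 0 h : ℤ) : k) = ((1 + (-1 : ℤ) ^ h : ℤ) : k) := by
      rw [alt0]
    push_cast at h0'
    linear_combination h0'
  have e2 : ∑ x ∈ Finset.Icc (h + 1) (m - 1),
      2 * ((altBinomSum (x - h) x : k) * y (x + 1))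
      = 2 * ∑ x ∈ Finset.Icc (h + 1) (m - 1), (altBinomSum (x - h) x : k) * y (x + 1) :=
    (Finset.mul_sum _ _ _).symm
  have e3 : ∑ x ∈ Finset.Icc (h + 1) (m - 1),
      (-1 : k) ^ h * (((x + 1).choose (h + 1) : k) * y (x + 1))
      = (-1 : k) ^ h * ∑ x ∈ Finset.Icc (h + 1) (m - 1),
          ((x + 1).choose (h + 1) : k) * y (x + 1) :=
    (Finset.mul_sum _ _ _).symm
  have he2 : (-1 : k) ^ h * (-1 : k) ^ h = 1 := by
    rw [← pow_add, ← two_mul, pow_mul]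
    norm_num
  linear_combination y (h + 1) * h0 + hsum - e2 + e3 - y (h + 1) * he2
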